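/- Fix a thin family 𝓕 of finite subsets of ℕ. Every infinite set M ⊆ ℕ contains an infinite subset B that decides all of its own finite subsets. -/

import Mathlib

/-- `S` is an initial segment of `T` (finite sets identified with increasing enumerations). -/
def InitSeg (S T : Finset ℕ) : Prop :=
  ∃ S2 : Finset ℕ, T = S ∪ S2 ∧ ∀ a ∈ S, ∀ b ∈ S2, a < b

/-- A family of finite sets is thin: no member is a proper initial segment of another. -/
def ThinFam (F : Set (Finset ℕ)) : Prop :=
  ∀ S ∈ F, ∀ T ∈ F, InitSeg S T → S = T

/-- Two finite sets are comparable if one is an initial segment of the other. -/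
def Comparable (s t : Finset ℕ) : Prop := InitSeg s t ∨ InitSeg t s

/-- `B` accepts `S` (with respect to `F`): some `t ∈ F` comparable with `S`
satisfies `t ∖ S ⊆ B`. -/
def Accepts (F : Set (Finset ℕ)) (S : Finset ℕ) (B : Set ℕ) : Prop :=
  ∃ t ∈ F, Comparable t S ∧ ((t \ S : Finset ℕ) : Set ℕ) ⊆ B

/-- `B` rejects `S`: `B` does not accept `S`. -/
def Rejects (F : Set (Finset ℕ)) (S : Finset ℕ) (B : Set ℕ) : Prop :=
  ¬ Accepts F S B

/-- `B` strongly accepts `S`: every infinite subset of `B` accepts `S`. -/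
def StronglyAccepts (F : Set (Finset ℕ)) (S : Finset ℕ) (B : Set ℕ) : Prop :=
  ∀ C ⊆ B, C.Infinite → Accepts F S C

/-- `B` decides `S`: `B` rejects `S` or strongly accepts `S`. -/
def Decides (F : Set (Finset ℕ)) (S : Finset ℕ) (B : Set ℕ) : Prop :=
  Rejects F S B ∨ StronglyAccepts F S B

namespace NWaux

attribute [local instance] Classical.propDecidable

lemma accepts_mono {F : Set (Finset ℕ)} {S : Finset ℕ} {B B' : Set ℕ} (h : B ⊆ B')
    (ha : Accepts F S B) : Accepts F S B' := by
  obtain ⟨t, ht, hc, hs⟩ := ha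
  exact ⟨t, ht, hc, hs.trans h⟩

lemma decides_mono {F : Set (Finset ℕ)} {S : Finset ℕ} {B C : Set ℕ} (h : C ⊆ B)
    (hd : Decides F S B) : Decides F S C := by
  rcases hd with hr | hs
  · exact Or.inl (fun ha => hr (accepts_mono h ha))
  · exact Or.inr (fun D hD hDi => hs D (hD.trans h) hDi)

lemma exists_decides (F : Set (Finset ℕ)) (B : Set ℕ) (hB : B.Infinite) (S : Finset ℕ) :
    ∃ C, C ⊆ B ∧ C.Infinite ∧ Decides F S C := by
  by_cases h : ∃ C, C ⊆ B ∧ C.Infinite ∧ Rejects F S C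
  · obtain ⟨C, h1, h2, h3⟩ := h; exact ⟨C, h1, h2, Or.inl h3⟩
  · refine ⟨B, subset_rfl, hB, Or.inr fun C hC hCi => ?_⟩
    by_contra ha
    exact h ⟨C, hC, hCi, ha⟩

lemma exists_decides_list (F : Set (Finset ℕ)) :
    ∀ (l : List (Finset ℕ)) (B : Set ℕ), B.Infinite →
      ∃ C, C ⊆ B ∧ C.Infinite ∧ ∀ S ∈ l, Decides F S C := by
  intro l
  induction l with
  | nil => intro B hB; exact ⟨B, subset_rfl, hB, by simp⟩
  | cons S l ih =>
    intro B hB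
    obtain ⟨C, h1, h2, h3⟩ := ih B hB
    obtain ⟨C', g1, g2, g3⟩ := exists_decides F C h2 S
    refine ⟨C', g1.trans h1, g2, ?_⟩
    intro S' hS'
    rcases List.mem_cons.mp hS' with rfl | hS'
    · exact g3
    · exact decides_mono g1 (h3 S' hS')

lemma step_ex (F : Set (Finset ℕ)) (B : Set ℕ) (hB : B.Infinite) (n : ℕ) (A : Finset ℕ) :
    ∃ C, C ⊆ B ∧ C.Infinite ∧ (∀ x ∈ C, n < x) ∧ ∀ S ⊆ A, Decides F S C := by
  have hB' : (B ∩ Set.Ioi n).Infinite := by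
    refine (hB.diff (Set.finite_Iic n)).mono ?_
    intro x hx
    exact ⟨hx.1, Set.mem_Ioi.mpr (lt_of_not_ge hx.2)⟩
  obtain ⟨C, h1, h2, h3⟩ := exists_decides_list F A.powerset.toList _ hB'
  refine ⟨C, h1.trans Set.inter_subset_left, h2, fun x hx => (h1 hx).2, fun S hS => ?_⟩
  exact h3 S (by simpa [Finset.mem_toList, Finset.mem_powerset] using hS)

noncomputable def step (F : Set (Finset ℕ)) (B : Set ℕ) (n : ℕ) (A : Finset ℕ) : Set ℕ :=
  if hB : B.Infinite then (step_ex F B hB n A).choose else Set.univ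

lemma step_infinite (F : Set (Finset ℕ)) (B : Set ℕ) (n : ℕ) (A : Finset ℕ) :
    (step F B n A).Infinite := by
  unfold step
  split
  · next hB => exact (step_ex F B hB n A).choose_spec.2.1
  · exact Set.infinite_univ

lemma step_spec (F : Set (Finset ℕ)) {B : Set ℕ} (hB : B.Infinite) (n : ℕ) (A : Finset ℕ) :
    step F B n A ⊆ B ∧ (∀ x ∈ step F B n A, n < x) ∧ ∀ S ⊆ A, Decides F S (step F B n A) := by
  unfold step
  rw [dif_pos hB]
  obtain ⟨s1, _, s3, s4⟩ := (step_ex F B hB n A).choose_spec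
  exact ⟨s1, s3, s4⟩

noncomputable def pt (B : Set ℕ) : ℕ := if h : B.Nonempty then h.choose else 0

lemma pt_mem {B : Set ℕ} (h : B.Infinite) : pt B ∈ B := by
  unfold pt
  rw [dif_pos h.nonempty]
  exact h.nonempty.choose_spec

noncomputable def chain (F : Set (Finset ℕ)) (M : Set ℕ) : ℕ → Set ℕ × ℕ × Finset ℕ
  | 0 => (step F M 0 ∅, pt (step F M 0 ∅), {pt (step F M 0 ∅)})
  | k + 1 =>
    (step F (chain F M k).1 (chain F M k).2.1 (chain F M k).2.2,
     pt (step F (chain F M k).1 (chain F M k).2.1 (chain F M k).2.2),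
     insert (pt (step F (chain F M k).1 (chain F M k).2.1 (chain F M k).2.2)) (chain F M k).2.2)

end NWaux

/-- Every infinite `M` contains an infinite subset `B` deciding all of its own
finite subsets. -/
theorem exists_infinite_decides_subsets (F : Set (Finset ℕ)) (hF : ThinFam F)
    (M : Set ℕ) (hM : M.Infinite) :
    ∃ B ⊆ M, B.Infinite ∧ ∀ T : Finset ℕ, (T : Set ℕ) ⊆ B → Decides F T B := by
  classical
  set Bk : ℕ → Set ℕ := fun k => (NWaux.chain F M k).1 with hBkdef
  set nk : ℕ → ℕ := fun k => (NWaux.chain F M k).2.1 with hnkdef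
  set Ak : ℕ → Finset ℕ := fun k => (NWaux.chain F M k).2.2 with hAkdef
  have hBk0 : Bk 0 = NWaux.step F M 0 ∅ := rfl
  have hBkS : ∀ k, Bk (k + 1) = NWaux.step F (Bk k) (nk k) (Ak k) := fun k => rfl
  have hnk : ∀ k, nk k = NWaux.pt (Bk k) := by
    intro k; cases k <;> rfl
  have hAkS : ∀ k, Ak (k + 1) = insert (nk (k + 1)) (Ak k) := fun k => rfl
  have hAk0 : Ak 0 = {nk 0} := rfl
  have hinf : ∀ k, (Bk k).Infinite := by
    intro k
    cases k with
    | zero => exact NWaux.step_infinite F M 0 ∅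
    | succ k => exact NWaux.step_infinite F (Bk k) (nk k) (Ak k)
  have hmem : ∀ k, nk k ∈ Bk k := by
    intro k; rw [hnk k]; exact NWaux.pt_mem (hinf k)
  have hstep : ∀ k, Bk (k + 1) ⊆ Bk k ∧ (∀ x ∈ Bk (k + 1), nk k < x) ∧
      ∀ S ⊆ Ak k, Decides F S (Bk (k + 1)) := by
    intro k
    rw [hBkS k]
    exact NWaux.step_spec F (hinf k) (nk k) (Ak k)
  have hspec0 := NWaux.step_spec F hM 0 (∅ : Finset ℕ)
  have hB0M : Bk 0 ⊆ M := by rw [hBk0]; exact hspec0.1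
  have hmono : StrictMono nk := by
    refine strictMono_nat_of_lt_succ fun k => ?_
    exact (hstep k).2.1 (nk (k + 1)) (hmem (k + 1))
  have hchain : ∀ j k, k ≤ j → Bk j ⊆ Bk k := by
    intro j
    induction j with
    | zero => intro k hk; rw [Nat.le_zero.mp hk]
    | succ j ih =>
      intro k hk
      rcases Nat.lt_or_ge k (j + 1) with h | h
      · exact Set.Subset.trans (hstep j).1 (ih k (Nat.lt_succ_iff.mp h))
      · rw [Nat.le_antisymm hk h]
  have hA : ∀ k j, j ≤ k → nk j ∈ Ak k := by
    intro k
    induction k with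
    | zero => intro j hj; rw [Nat.le_zero.mp hj, hAk0]; exact Finset.mem_singleton_self _
    | succ k ih =>
      intro j hj
      rw [hAkS k]
      rcases Nat.lt_or_ge j (k + 1) with h | h
      · exact Finset.mem_insert_of_mem (ih j (Nat.lt_succ_iff.mp h))
      · rw [Nat.le_antisymm hj h]; exact Finset.mem_insert_self _ _
  refine ⟨Set.range nk, ?_, Set.infinite_range_of_injective hmono.injective, ?_⟩
  · rintro _ ⟨j, rfl⟩
    exact hB0M (hchain j 0 (Nat.zero_le j) (hmem j))
  have htail : ∀ k x, x ∈ Set.range nk → nk k < x → x ∈ Bk (k + 1) := by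
    rintro k _ ⟨j, rfl⟩ hlt
    have hkj : k < j := by
      by_contra h
      exact absurd (hmono.monotone (le_of_not_gt h)) (not_le.mpr hlt)
    exact hchain j (k + 1) hkj (hmem j)
  intro T hTB
  by_cases hTe : T = ∅
  · subst hTe
    refine NWaux.decides_mono ?_ (hspec0.2.2 ∅ (Finset.Subset.refl _))
    rw [← hBk0]
    rintro _ ⟨j, rfl⟩
    exact hchain j 0 (Nat.zero_le j) (hmem j)
  · have hne : T.Nonempty := Finset.nonempty_iff_ne_empty.mpr hTe
    obtain ⟨k, hk⟩ := hTB (T.max'_mem hne)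
    -- hk : nk k = T.max' hne
    have hTA : T ⊆ Ak k := by
      intro x hx
      obtain ⟨j, rfl⟩ := hTB hx
      have hle : nk j ≤ nk k := by rw [hk]; exact T.le_max' _ hx
      exact hA k j (hmono.le_iff_le.mp hle)
    have hdec := (hstep k).2.2 T hTA
    rcases hdec with hr | hs
    · left
      intro hacc
      obtain ⟨t, htF, hcomp, hsub⟩ := hacc
      apply hr
      refine ⟨t, htF, hcomp, ?_⟩
      rcases hcomp with h1 | h2
      · obtain ⟨S2, hTeq, _⟩ := h1
        have ht' : t ⊆ T := by rw [hTeq]; exact Finset.subset_union_left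
        rw [Finset.sdiff_eq_empty_iff_subset.mpr ht']
        simp
      · obtain ⟨S2, hteq, hlt⟩ := h2
        intro x hx
        have hx' : x ∈ t \ T := hx
        rw [Finset.mem_sdiff] at hx'
        have hxS2 : x ∈ S2 := by
          rcases Finset.mem_union.mp (hteq ▸ hx'.1) with h | h
          · exact absurd h hx'.2
          · exact h
        have hmx : T.max' hne < x := hlt _ (T.max'_mem hne) _ hxS2
        exact htail k x (hsub hx) (hk ▸ hmx)
    · right
      intro C hC hCi
      have hC' : C ∩ Set.Ioi (nk k) ⊆ Bk (k + 1) := fun x hx => htail k x (hC hx.1) hx.2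
      have hCi' : (C ∩ Set.Ioi (nk k)).Infinite := by
        refine (hCi.diff (Set.finite_Iic (nk k))).mono ?_
        intro x hx
        exact ⟨hx.1, Set.mem_Ioi.mpr (lt_of_not_ge hx.2)⟩
      exact NWaux.accepts_mono Set.inter_subset_left (hs _ hC' hCi')
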